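/- Let f : ℝ → S¹ be continuous and suppose there exists L ∈ S¹ such that f(x) → L as x → +∞ and f(x) → L as x → −∞. Then f admits a lift f̃ : ℝ → ℝ, and for any such lift the limit lim_{x→+∞} (f̃(x) − f̃(−x)) exists and is an integer; this integer does not depend on the choice of lift. -/

import Mathlib

open Filter

/-- A continuous function `f : ℝ → ℂ` taking values in the unit circle `S¹` is *pre-periodic*
if for every `ε > 0` there is a positive integer `N` such that
`|f (x + k * N) - f x| < ε` for all integers `k` and all real `x`. -/
def PrePeriodic (f : ℝ → ℂ) : Prop :=
  Continuous f ∧ (∀ x : ℝ, ‖f x‖ = 1) ∧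
    ∀ ε : ℝ, 0 < ε → ∃ N : ℕ, 0 < N ∧
      ∀ (k : ℤ) (x : ℝ), ‖f (x + (k : ℝ) * (N : ℝ)) - f x‖ < ε

/-- `F : ℝ → ℝ` is a lift of `f : ℝ → S¹ ⊆ ℂ` if `F` is continuous and
`f x = e^{2 π i F x}` for all `x`. -/
def IsLift (f : ℝ → ℂ) (F : ℝ → ℝ) : Prop :=
  Continuous F ∧ ∀ x : ℝ, f x = Complex.exp (2 * Real.pi * Complex.I * (F x : ℂ))

section WindingHelpers
open Complex Set

noncomputable def wphi (w : ℂ) : ℝ := Complex.arg w / (2 * Real.pi)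

lemma exp_wphi {w : ℂ} (hw : ‖w‖ = 1) :
    Complex.exp (2 * Real.pi * Complex.I * (wphi w : ℂ)) = w := by
  have hπ : (Real.pi : ℝ) ≠ 0 := Real.pi_ne_zero
  have hπc : (Real.pi : ℂ) ≠ 0 := by exact_mod_cast hπ
  have h1 : (2 * (Real.pi:ℂ) * Complex.I * ((wphi w : ℝ) : ℂ)) = (Complex.arg w) * Complex.I := by
    unfold wphi; push_cast; field_simp
  have h2 := Complex.norm_mul_exp_arg_mul_I w
  rw [hw] at h2
  push_cast
  rw [h1]
  simpa using h2

lemma wphi_one : wphi 1 = 0 := by simp [wphi]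

lemma slit_of_close {w : ℂ} (h : ‖w - 1‖ < 1) : w ∈ Complex.slitPlane := by
  left
  have h1 : |(w - 1).re| ≤ ‖w - 1‖ := Complex.abs_re_le_norm (w - 1)
  have : (w - 1).re = w.re - 1 := by simp
  rw [this] at h1
  have := abs_lt.mp (lt_of_le_of_lt h1 h)
  linarith [this.1]

lemma continuousAt_wphi {w : ℂ} (h : ‖w - 1‖ < 1) : ContinuousAt wphi w :=
  (Complex.continuousAt_arg (slit_of_close h)).div_const _

lemma int_of_exp_eq_one {t : ℝ} (h : Complex.exp (2 * Real.pi * Complex.I * (t : ℂ)) = 1) :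
    ∃ k : ℤ, t = k := by
  rw [Complex.exp_eq_one_iff] at h
  obtain ⟨n, hn⟩ := h
  refine ⟨n, ?_⟩
  have hne : (2 * (Real.pi:ℂ) * Complex.I) ≠ 0 := by
    exact mul_ne_zero (mul_ne_zero two_ne_zero (by exact_mod_cast Real.pi_ne_zero)) Complex.I_ne_zero
  have : (t : ℂ) = (n : ℂ) := by
    have h3 : (t : ℂ) * (2 * (Real.pi:ℂ) * Complex.I) = (n:ℂ) * (2 * (Real.pi:ℂ) * Complex.I) := by
      linear_combination hn
    exact mul_right_cancel₀ hne h3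
  exact_mod_cast this

lemma int_const {g : ℝ → ℝ} {s : Set ℝ} (hsc : IsPreconnected s) (hg : ContinuousOn g s)
    (hint : ∀ x ∈ s, ∃ k : ℤ, g x = k) {a b : ℝ} (ha : a ∈ s) (hb : b ∈ s) : g a = g b := by
  by_contra hne
  obtain ⟨k, hk⟩ := hint a ha
  obtain ⟨l, hl⟩ := hint b hb
  rcases lt_trichotomy (g a) (g b) with hlt | heq | hgt
  · have hkl : k < l := by rw [hk, hl] at hlt; exact_mod_cast hlt
    have hmem : (k : ℝ) + 1/2 ∈ Set.Icc (g a) (g b) := by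
      constructor
      · rw [hk]; linarith
      · rw [hl]
        have h5 : (k:ℝ) + 1 ≤ l := by exact_mod_cast hkl
        linarith
    obtain ⟨c, hcs, hc⟩ := hsc.intermediate_value ha hb hg hmem
    obtain ⟨m, hm⟩ := hint c hcs
    rw [hm] at hc
    have : (2*m : ℤ) = 2*k+1 := by
      have : (2*(m:ℝ)) = 2*k+1 := by linarith
      exact_mod_cast this
    omega
  · exact hne heq
  · have hkl : l < k := by rw [hk, hl] at hgt; exact_mod_cast hgt
    have hmem : (l : ℝ) + 1/2 ∈ Set.Icc (g b) (g a) := by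
      constructor
      · rw [hl]; linarith
      · rw [hk]
        have h5 : (l:ℝ) + 1 ≤ k := by exact_mod_cast hkl
        linarith
    obtain ⟨c, hcs, hc⟩ := hsc.intermediate_value hb ha hg hmem
    obtain ⟨m, hm⟩ := hint c hcs
    rw [hm] at hc
    have : (2*m : ℤ) = 2*l+1 := by
      have : (2*(m:ℝ)) = 2*l+1 := by linarith
      exact_mod_cast this
    omega

noncomputable def wS (a : ℤ → ℝ) (n : ℤ) : ℝ :=
  (∑ j ∈ Finset.range n.toNat, a j) - ∑ j ∈ Finset.range (-n).toNat, a (-(j+1))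

lemma wS_zero (a : ℤ → ℝ) : wS a 0 = 0 := by simp [wS]

lemma wS_succ (a : ℤ → ℝ) (n : ℤ) : wS a (n+1) = wS a n + a n := by
  rcases le_or_gt 0 n with hn | hn
  · have h1 : (n+1).toNat = n.toNat + 1 := by omega
    have h2 : (-n).toNat = 0 := by omega
    have h3 : (-(n+1)).toNat = 0 := by omega
    have h4 : ((n.toNat : ℤ)) = n := Int.toNat_of_nonneg hn
    unfold wS
    rw [h1, h2, h3, Finset.sum_range_succ, h4]
    ring
  · set m := (-(n+1)).toNat with hm
    have h1 : (n+1).toNat = 0 := by omega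
    have h2 : n.toNat = 0 := by omega
    have h3 : (-n).toNat = m + 1 := by omega
    have h4 : ((m : ℤ)) = -(n+1) := Int.toNat_of_nonneg (by omega)
    have h5 : (-((m:ℤ)+1)) = n := by omega
    unfold wS
    rw [h1, h2, h3, Finset.sum_range_succ, h5]
    ring

end WindingHelpers

open Complex Set

/-- If `f : ℝ → S¹` is continuous and has the same limit `L` at `+∞` and `-∞`, then `f`
admits a lift, and for any lift `F` the limit `lim_{x → +∞} (F x - F (-x))` exists and is
an integer independent of the choice of the lift: the *winding number* of `f`. -/
theorem winding_number_of_common_limits (f : ℝ → ℂ) (L : ℂ)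
    (hc : Continuous f) (hs : ∀ x : ℝ, ‖f x‖ = 1) (hL : ‖L‖ = 1)
    (htop : Tendsto f atTop (nhds L)) (hbot : Tendsto f atBot (nhds L)) :
    (∃ F : ℝ → ℝ, IsLift f F) ∧
      ∃ n : ℤ, ∀ F : ℝ → ℝ, IsLift f F →
        Tendsto (fun x : ℝ => F x - F (-x)) atTop (nhds (n : ℝ)) := by
  classical
  have hL0 : L ≠ 0 := fun h => by simp [h] at hL
  have hfne : ∀ x, f x ≠ 0 := by
    intro x hx
    have := hs x; rw [hx] at this; simp at this
  have hnormdiv : ∀ x y : ℝ, ‖f x / f y‖ = 1 := by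
    intro x y; rw [norm_div, hs, hs]; norm_num
  -- uniform continuity
  have hcc : Tendsto f (cocompact ℝ) (nhds L) := by
    rw [cocompact_eq_atBot_atTop]
    exact hbot.sup htop
  have hu := hc.uniformContinuous_of_tendsto_cocompact hcc
  obtain ⟨δ, hδ0, hδ⟩ := Metric.uniformContinuous_iff.mp hu 1 one_pos
  set h : ℝ := δ / 2 with hhdef
  have hh0 : 0 < h := by positivity
  have hclose : ∀ x y : ℝ, |x - y| ≤ h → ‖f x / f y - 1‖ < 1 := by
    intro x y hxy
    have hd : dist x y < δ := by
      rw [Real.dist_eq]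
      calc |x - y| ≤ h := hxy
        _ < δ := by rw [hhdef]; linarith
    have h2 := hδ hd
    rw [div_sub_one (hfne y), norm_div, hs y, div_one]
    rwa [dist_eq_norm] at h2
  set a : ℤ → ℝ := fun m => wphi (f (((m:ℝ)+1) * h) / f ((m:ℝ) * h)) with hadef
  set θ₀ : ℝ := wphi (f 0) with hθdef
  set E : ℤ → ℝ := fun n => θ₀ + wS a n with hEdef
  have expa : ∀ m : ℤ, Complex.exp (2 * Real.pi * Complex.I * ((a m : ℝ):ℂ))
      = f (((m:ℝ)+1) * h) / f ((m:ℝ) * h) := fun m => exp_wphi (hnormdiv _ _)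
  have hErec : ∀ n : ℤ, E (n+1) = E n + a n := by
    intro n; simp only [hEdef, wS_succ]; ring
  have expE : ∀ n : ℤ, Complex.exp (2 * Real.pi * Complex.I * ((E n : ℝ):ℂ)) = f ((n:ℝ) * h) := by
    intro n
    induction n using Int.induction_on with
    | zero =>
      simp only [hEdef, wS_zero, add_zero]
      rw [hθdef, exp_wphi (hs 0)]
      norm_num
    | succ k ih =>
      rw [hErec k,
        show ((E k + a k : ℝ) : ℂ) = ((E k :ℝ):ℂ) + ((a k:ℝ):ℂ) from by push_cast; ring,
        mul_add, Complex.exp_add, ih, expa k, mul_comm (f (((k:ℤ):ℝ) * h)),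
        div_mul_cancel₀ _ (hfne _)]
      norm_cast
    | pred k ih =>
      have hrec := hErec (-(k:ℤ)-1)
      rw [show (-(k:ℤ)-1)+1 = -(k:ℤ) from by ring] at hrec
      have hsplit : Complex.exp (2 * Real.pi * Complex.I * ((E (-(k:ℤ)) :ℝ):ℂ))
          = Complex.exp (2 * Real.pi * Complex.I * ((E (-(k:ℤ)-1) :ℝ):ℂ))
            * Complex.exp (2 * Real.pi * Complex.I * ((a (-(k:ℤ)-1) :ℝ):ℂ)) := by
        rw [hrec,
          show ((E (-(k:ℤ)-1) + a (-(k:ℤ)-1) : ℝ) : ℂ)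
              = ((E (-(k:ℤ)-1) :ℝ):ℂ) + ((a (-(k:ℤ)-1):ℝ):ℂ) from by push_cast; ring,
          mul_add, Complex.exp_add]
      rw [expa, ih,
        show (((-(k:ℤ)-1 : ℤ):ℝ)+1) = ((-(k:ℤ) : ℤ):ℝ) from by push_cast; ring] at hsplit
      set p := f (((-(k:ℤ) : ℤ):ℝ) * h) with hpdef
      set r := f (((-(k:ℤ)-1 : ℤ):ℝ) * h) with hrdef
      have hp : p ≠ 0 := hfne _
      have hr : r ≠ 0 := hfne _
      have h9 : Complex.exp (2 * Real.pi * Complex.I * ((E (-(k:ℤ)-1) :ℝ):ℂ)) * (p / r) = p :=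
        hsplit.symm
      have h10 : Complex.exp (2 * Real.pi * Complex.I * ((E (-(k:ℤ)-1) :ℝ):ℂ)) = p / (p / r) := by
        rw [eq_div_iff (div_ne_zero hp hr)]; exact h9
      rw [h10, div_div_eq_mul_div, mul_comm, mul_div_assoc, div_self hp, mul_one]
  -- the lift
  set F : ℝ → ℝ := fun x => E ⌊x/h⌋ + wphi (f x / f ((⌊x/h⌋ : ℝ) * h)) with hFdef
  have expF : ∀ x : ℝ, f x = Complex.exp (2 * Real.pi * Complex.I * ((F x : ℝ):ℂ)) := by
    intro x
    have h1 : ((F x : ℝ):ℂ) = ((E ⌊x/h⌋ :ℝ):ℂ) + ((wphi (f x / f ((⌊x/h⌋ : ℝ) * h)) :ℝ):ℂ) := by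
      simp only [hFdef]; push_cast; ring
    rw [h1, mul_add, Complex.exp_add, expE, exp_wphi (hnormdiv _ _),
      mul_comm (f ((((⌊x/h⌋ : ℤ)):ℝ) * h)), div_mul_cancel₀ _ (hfne _)]
  set G : ℤ → ℝ → ℝ := fun n x => E n + wphi (f x / f ((n:ℝ) * h)) with hGdef
  have claimB : ∀ (n : ℤ) (x : ℝ), x ∈ Icc ((n:ℝ)*h) (((n:ℝ)+1)*h) → F x = G n x := by
    intro n x hx
    rcases eq_or_lt_of_le hx.2 with heq | hlt
    · have hxh : x / h = ((n+1 : ℤ) : ℝ) := by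
        rw [heq]
        push_cast
        field_simp
      have hfl : ⌊x/h⌋ = n + 1 := by rw [hxh, Int.floor_intCast]
      have hxx : x = (((n+1:ℤ)):ℝ) * h := by
        rw [heq]; push_cast; ring
      simp only [hFdef, hGdef, hfl]
      rw [hxx, div_self (hfne _), wphi_one, add_zero, hErec n, hadef]
      push_cast
      ring
    · have hfl : ⌊x/h⌋ = n := by
        rw [Int.floor_eq_iff]
        constructor
        · rw [le_div_iff₀ hh0]; exact hx.1
        · rw [div_lt_iff₀ hh0]; push_cast; linarith
      simp only [hFdef, hGdef, hfl]
  have hGcont : ∀ (n : ℤ) (x : ℝ), x ∈ Icc ((n:ℝ)*h) (((n:ℝ)+1)*h) → ContinuousAt (G n) x := by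
    intro n x hx
    have hexp : ((n:ℝ)+1)*h = (n:ℝ)*h + h := by ring
    have hdist : |x - (n:ℝ)*h| ≤ h := by
      rw [abs_le]
      constructor
      · linarith [hx.1]
      · have := hx.2; rw [hexp] at this; linarith
    have hsl := hclose x ((n:ℝ)*h) hdist
    have hwc : ContinuousAt wphi (f x / f ((n:ℝ)*h)) := continuousAt_wphi hsl
    have hinner : ContinuousAt (fun y => f y / f ((n:ℝ)*h)) x :=
      (hc.continuousAt).div continuousAt_const (hfne _)
    simp only [hGdef]
    have hcmp : ContinuousAt (wphi ∘ (fun y => f y / f ((n:ℝ)*h))) x := ContinuousAt.comp (g := wphi) (f := fun y => f y / f ((n:ℝ)*h)) hwc hinner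
    exact continuousAt_const.add hcmp
  have hFcont : Continuous F := by
    rw [continuous_iff_continuousAt]
    intro x
    rw [continuousAt_iff_continuous_left_right]
    constructor
    · set m : ℤ := ⌈x/h⌉ - 1 with hmdef
      have hml : (m:ℝ)*h < x := by
        have h1 : ((m:ℝ)) < x/h := by
          have := Int.ceil_lt_add_one (x/h)
          push_cast [hmdef]
          push_cast at this
          linarith
        calc (m:ℝ)*h < (x/h)*h := by exact mul_lt_mul_of_pos_right h1 hh0
          _ = x := by field_simp
      have hmr : x ≤ ((m:ℝ)+1)*h := by
        have h1 : x/h ≤ ((m:ℝ)+1) := by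
          have := Int.le_ceil (x/h)
          push_cast [hmdef]
          linarith
        calc x = (x/h)*h := by field_simp
          _ ≤ ((m:ℝ)+1)*h := mul_le_mul_of_nonneg_right h1 hh0.le
      have hx' : x ∈ Icc ((m:ℝ)*h) (((m:ℝ)+1)*h) := ⟨hml.le, hmr⟩
      have hcw : ContinuousWithinAt (G m) (Iic x) x := (hGcont m x hx').continuousWithinAt
      apply hcw.congr_of_eventuallyEq
      · have hev : Icc ((m:ℝ)*h) (((m:ℝ)+1)*h) ∈ nhdsWithin x (Iic x) := by
          apply mem_nhdsWithin.mpr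
          refine ⟨Ioi ((m:ℝ)*h), isOpen_Ioi, hml, ?_⟩
          rintro y ⟨hy1, hy2⟩
          exact ⟨le_of_lt hy1, le_trans hy2 hmr⟩
        filter_upwards [hev] with y hy
        exact claimB m y hy
      · exact claimB m x hx'
    · set n : ℤ := ⌊x/h⌋ with hndef
      have hnl : (n:ℝ)*h ≤ x := by
        have h1 : ((n:ℝ)) ≤ x/h := Int.floor_le (x/h)
        calc (n:ℝ)*h ≤ (x/h)*h := mul_le_mul_of_nonneg_right h1 hh0.le
          _ = x := by field_simp
      have hnr : x < ((n:ℝ)+1)*h := by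
        have h1 : x/h < ((n:ℝ)+1) := Int.lt_floor_add_one (x/h)
        calc x = (x/h)*h := by field_simp
          _ < ((n:ℝ)+1)*h := mul_lt_mul_of_pos_right h1 hh0
      have hx' : x ∈ Icc ((n:ℝ)*h) (((n:ℝ)+1)*h) := ⟨hnl, hnr.le⟩
      have hcw : ContinuousWithinAt (G n) (Ici x) x := (hGcont n x hx').continuousWithinAt
      apply hcw.congr_of_eventuallyEq
      · have hev : Icc ((n:ℝ)*h) (((n:ℝ)+1)*h) ∈ nhdsWithin x (Ici x) := by
          apply mem_nhdsWithin.mpr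
          refine ⟨Iio (((n:ℝ)+1)*h), isOpen_Iio, hnr, ?_⟩
          rintro y ⟨hy1, hy2⟩
          exact ⟨le_trans hnl hy2, le_of_lt hy1⟩
        filter_upwards [hev] with y hy
        exact claimB n y hy
      · exact claimB n x hx'
  have hlift : IsLift f F := ⟨hFcont, expF⟩
  -- limits
  set θL : ℝ := wphi L with hθL
  have hnormdivL : ∀ x : ℝ, ‖f x / L‖ = 1 := by
    intro x; rw [norm_div, hs, hL]; norm_num
  have hdiv1 : ∀ x, ‖f x - L‖ < 1 → ‖f x / L - 1‖ < 1 := by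
    intro x hx
    rw [div_sub_one hL0, norm_div, hL, div_one]; exact hx
  have hwtend_top : Tendsto (fun x => wphi (f x / L)) atTop (nhds 0) := by
    have hd : Tendsto (fun x => f x / L) atTop (nhds 1) := by
      have := htop.div_const L
      rwa [div_self hL0] at this
    have hc1 : ContinuousAt wphi 1 := continuousAt_wphi (by norm_num)
    have := hc1.tendsto.comp hd
    rwa [wphi_one] at this
  have hwtend_bot : Tendsto (fun x => wphi (f x / L)) atBot (nhds 0) := by
    have hd : Tendsto (fun x => f x / L) atBot (nhds 1) := by
      have := hbot.div_const L
      rwa [div_self hL0] at this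
    have hc1 : ContinuousAt wphi 1 := continuousAt_wphi (by norm_num)
    have := hc1.tendsto.comp hd
    rwa [wphi_one] at this
  have hint_of_mem : ∀ x : ℝ, ∃ k : ℤ, F x - wphi (f x / L) - θL = k := by
    intro x
    apply int_of_exp_eq_one
    have hsplit : ((F x - wphi (f x / L) - θL : ℝ) : ℂ)
        = ((F x :ℝ):ℂ) - ((wphi (f x / L) :ℝ):ℂ) - ((θL:ℝ):ℂ) := by push_cast; ring
    rw [hsplit, mul_sub, mul_sub, Complex.exp_sub, Complex.exp_sub,
      ← expF x, exp_wphi (hnormdivL x), hθL, exp_wphi hL]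
    field_simp
    exact div_self (hfne x)
  have hwcont : ∀ s : Set ℝ, (∀ x ∈ s, ‖f x - L‖ < 1) →
      ContinuousOn (fun x => F x - wphi (f x / L) - θL) s := by
    intro s hsmall
    apply ContinuousOn.sub _ continuousOn_const
    apply ContinuousOn.sub (hFcont.continuousOn)
    intro x hx
    have h1 : ContinuousAt wphi (f x / L) := continuousAt_wphi (hdiv1 x (hsmall x hx))
    have h2 : ContinuousAt (fun y => f y / L) x := (hc.continuousAt).div_const L
    exact (ContinuousAt.comp (g := wphi) (f := fun y => f y / L) h1 h2).continuousWithinAt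
  have hevtop : ∀ᶠ x in atTop, ‖f x - L‖ < 1 := by
    have := Metric.tendsto_nhds.mp htop 1 one_pos
    filter_upwards [this] with x hx
    rwa [dist_eq_norm] at hx
  have hevbot : ∀ᶠ x in atBot, ‖f x - L‖ < 1 := by
    have := Metric.tendsto_nhds.mp hbot 1 one_pos
    filter_upwards [this] with x hx
    rwa [dist_eq_norm] at hx
  obtain ⟨M, hM⟩ := eventually_atTop.mp hevtop
  obtain ⟨M', hM'⟩ := eventually_atBot.mp hevbot
  obtain ⟨kp, hkp⟩ := hint_of_mem M
  obtain ⟨km, hkm⟩ := hint_of_mem M'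
  have hconstp : ∀ x, M ≤ x → F x - wphi (f x / L) - θL = kp := by
    intro x hx
    rw [← hkp]
    exact int_const isPreconnected_Ici (hwcont (Ici M) (fun y hy => hM y hy))
      (fun y _ => hint_of_mem y) hx self_mem_Ici
  have hconstm : ∀ x, x ≤ M' → F x - wphi (f x / L) - θL = km := by
    intro x hx
    rw [← hkm]
    exact int_const isPreconnected_Iic (hwcont (Iic M') (fun y hy => hM' y hy))
      (fun y _ => hint_of_mem y) hx self_mem_Iic
  have hFtop : Tendsto F atTop (nhds ((kp:ℝ) + θL)) := by
    have hevF : (fun x => (kp:ℝ) + wphi (f x / L) + θL) =ᶠ[atTop] F := by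
      filter_upwards [eventually_ge_atTop M] with x hx
      have := hconstp x hx
      linarith
    have htt : Tendsto (fun x => (kp:ℝ) + wphi (f x / L) + θL) atTop
        (nhds ((kp:ℝ) + 0 + θL)) :=
      (tendsto_const_nhds.add hwtend_top).add tendsto_const_nhds
    rw [add_zero] at htt
    exact Filter.Tendsto.congr' hevF htt
  have hFbot : Tendsto F atBot (nhds ((km:ℝ) + θL)) := by
    have hevF : (fun x => (km:ℝ) + wphi (f x / L) + θL) =ᶠ[atBot] F := by
      filter_upwards [eventually_le_atBot M'] with x hx
      have := hconstm x hx
      linarith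
    have htt : Tendsto (fun x => (km:ℝ) + wphi (f x / L) + θL) atBot
        (nhds ((km:ℝ) + 0 + θL)) :=
      (tendsto_const_nhds.add hwtend_bot).add tendsto_const_nhds
    rw [add_zero] at htt
    exact Filter.Tendsto.congr' hevF htt
  refine ⟨⟨F, hlift⟩, kp - km, ?_⟩
  intro F' hF'
  have hdint : ∀ x : ℝ, ∃ k : ℤ, F' x - F x = k := by
    intro x
    apply int_of_exp_eq_one
    rw [show ((F' x - F x : ℝ):ℂ) = ((F' x:ℝ):ℂ) - ((F x:ℝ):ℂ) from by push_cast; ring,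
      mul_sub, Complex.exp_sub, ← hF'.2 x, ← expF x, div_self (hfne x)]
  have hdconst : ∀ x : ℝ, F' x - F x = F' 0 - F 0 := by
    intro x
    exact int_const isPreconnected_univ ((hF'.1.sub hFcont).continuousOn)
      (fun y _ => hdint y) (mem_univ x) (mem_univ 0)
  have heqfun : (fun x : ℝ => F' x - F' (-x)) = fun x => F x - F (-x) := by
    funext x
    have h1 := hdconst x
    have h2 := hdconst (-x)
    linarith
  rw [heqfun]
  have hfinal : Tendsto (fun x : ℝ => F x - F (-x)) atTop
      (nhds (((kp:ℝ) + θL) - ((km:ℝ) + θL))) :=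
    hFtop.sub (hFbot.comp tendsto_neg_atTop_atBot)
  have hval : (((kp - km : ℤ)):ℝ) = ((kp:ℝ) + θL) - ((km:ℝ) + θL) := by push_cast; ring
  rw [hval]
  exact hfinal
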